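/- For a d-tuple T of bounded operators on H, the spherical Heinz transform T̂(t) is the zero tuple for some t ∈ (0,1) if and only if the generalized spherical Aluthge transform T̃(s) is the zero tuple for every s ∈ (0,1]. -/

import Mathlib

open ContinuousLinearMap

variable {H : Type*} [NormedAddCommGroup H] [InnerProductSpace ℂ H] [CompleteSpace H]

/-- `t`-th power of a positive operator, via the continuous functional calculus. -/
noncomputable def opPow (P : H →L[ℂ] H) (s : ℝ) : H →L[ℂ] H :=
  cfc (fun x : ℝ => x ^ s) P

local notation "⟪" x ", " y "⟫" => @inner ℂ _ _ x y

section Aux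

lemma aux_rpow_continuous {a : ℝ} (ha : 0 ≤ a) : Continuous (fun x : ℝ => x ^ a) :=
  Real.continuous_rpow_const ha

lemma aux_spectrum_nonneg {P : H →L[ℂ] H} (hP : 0 ≤ P) :
    ∀ x ∈ spectrum ℝ P, (0 : ℝ) ≤ x :=
  spectrum_nonneg_of_nonneg hP

lemma aux_comp_eq_mul (A W B : H →L[ℂ] H) : A ∘L W ∘L B = A * W * B := by
  rw [mul_assoc]; rfl

lemma opPow_selfAdjoint (P : H →L[ℂ] H) (s : ℝ) : IsSelfAdjoint (opPow P s) :=
  cfc_predicate _ _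

lemma opPow_add {P : H →L[ℂ] H} (hP : 0 ≤ P) {a b : ℝ} (ha : 0 ≤ a) (hb : 0 ≤ b) :
    opPow P (a + b) = opPow P a * opPow P b := by
  unfold opPow
  rw [← cfc_mul _ _ P (aux_rpow_continuous ha).continuousOn
      (aux_rpow_continuous hb).continuousOn]
  exact cfc_congr fun x hx => Real.rpow_add_of_nonneg (aux_spectrum_nonneg hP x hx) ha hb

lemma opPow_one {P : H →L[ℂ] H} (hP : 0 ≤ P) : opPow P 1 = P := by
  unfold opPow
  rw [cfc_congr (g := fun x : ℝ => x) fun x _ => Real.rpow_one x]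
  exact cfc_id' ℝ P hP.isSelfAdjoint

/-- A self-adjoint operator killing a vector after `2^n` iterations kills it. -/
lemma aux_pow_two_apply_eq_zero {A : H →L[ℂ] H} (hA : IsSelfAdjoint A) {x : H} :
    ∀ n : ℕ, (A ^ (2 ^ n)) x = 0 → A x = 0 := by
  intro n
  induction n with
  | zero => simpa using fun h => h
  | succ n ih =>
    intro h
    have hsplit : A ^ (2 ^ (n + 1)) = A ^ (2 ^ n) * A ^ (2 ^ n) := by
      rw [← pow_add]
      congr 1
      ring
    have h2 : (A ^ (2 ^ n)) ((A ^ (2 ^ n)) x) = 0 := by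
      have := congrArg (fun (B : H →L[ℂ] H) => B x) hsplit
      simp only [ContinuousLinearMap.mul_apply] at this
      rw [← this]; exact h
    have hsa : IsSelfAdjoint (A ^ (2 ^ n)) := hA.pow _
    have hinner : ⟪(A ^ (2 ^ n)) x, (A ^ (2 ^ n)) x⟫ = 0 := by
      have hadj : adjoint (A ^ (2 ^ n)) = A ^ (2 ^ n) := hsa.adjoint_eq
      calc ⟪(A ^ (2 ^ n)) x, (A ^ (2 ^ n)) x⟫
          = ⟪(adjoint (A ^ (2 ^ n))) ((A ^ (2 ^ n)) x), x⟫ := by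
            rw [ContinuousLinearMap.adjoint_inner_left]
        _ = ⟪(A ^ (2 ^ n)) ((A ^ (2 ^ n)) x), x⟫ := by rw [hadj]
        _ = 0 := by rw [h2, inner_zero_left]
    exact ih (inner_self_eq_zero.mp hinner)

lemma aux_pow_apply_eq_zero {A : H →L[ℂ] H} (hA : IsSelfAdjoint A) {x : H} {n : ℕ}
    (hn : 0 < n) (h : (A ^ n) x = 0) : A x = 0 := by
  refine aux_pow_two_apply_eq_zero hA n ?_
  have hle : n ≤ 2 ^ n := Nat.le_of_lt (Nat.lt_two_pow_self (n := n))
  have : A ^ (2 ^ n) = A ^ (2 ^ n - n) * A ^ n := by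
    rw [← pow_add, Nat.sub_add_cancel hle]
  rw [this, ContinuousLinearMap.mul_apply, h, map_zero]

/-- The kernel of `P` is contained in the kernel of `P^s` for `s > 0`. -/
lemma opPow_apply_eq_zero {P : H →L[ℂ] H} (hP : 0 ≤ P) {s : ℝ} (hs : 0 < s) {x : H}
    (hx : P x = 0) : opPow P s x = 0 := by
  set n : ℕ := ⌈s⁻¹⌉₊ with hn
  have hnpos : 0 < n := Nat.ceil_pos.2 (by positivity)
  have hns : 1 ≤ (n : ℝ) * s := by
    have h1 : s⁻¹ ≤ (n : ℝ) := Nat.le_ceil _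
    calc (1 : ℝ) = s⁻¹ * s := by field_simp
      _ ≤ (n : ℝ) * s := by gcongr
  have hpow : (opPow P s) ^ n = opPow P ((n : ℝ) * s) := by
    unfold opPow
    rw [← cfc_pow _ n P (aux_rpow_continuous hs.le).continuousOn]
    exact cfc_congr fun y hy => by
      rw [← Real.rpow_natCast (y ^ s) n, ← Real.rpow_mul (aux_spectrum_nonneg hP y hy),
        mul_comm s (n : ℝ)]
  have hsplit : opPow P ((n : ℝ) * s) = opPow P ((n : ℝ) * s - 1) * opPow P 1 := by
    rw [← opPow_add hP (by linarith) zero_le_one, sub_add_cancel]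
  have hzero : ((opPow P s) ^ n) x = 0 := by
    rw [hpow, hsplit, ContinuousLinearMap.mul_apply, opPow_one hP, hx, map_zero]
  exact aux_pow_apply_eq_zero (opPow_selfAdjoint P s) hnpos hzero

/-- Anything commuting with a self-adjoint operator commutes with its functional calculus. -/
lemma aux_commute_cfc {P B : H →L[ℂ] H} (hP : IsSelfAdjoint P) (h : Commute B P)
    (f : ℝ → ℝ) : Commute B (cfc f P) := by
  refine cfc_cases (fun y => Commute B y) P f (Commute.zero_right B) fun hf ha => ?_
  suffices hall : ∀ g : C(spectrum ℝ P, ℝ), Commute B (cfcHom ha g) by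
    exact hall ⟨_, hf.restrict⟩
  intro g
  let 𝒜 : Subalgebra ℝ C(spectrum ℝ P, ℝ) :=
    { carrier := {g | Commute B (cfcHom ha g)}
      mul_mem' := by
        intro f₁ f₂ h1 h2
        show Commute B (cfcHom ha (f₁ * f₂))
        rw [map_mul]
        exact Commute.mul_right h1 h2
      add_mem' := by
        intro f₁ f₂ h1 h2
        show Commute B (cfcHom ha (f₁ + f₂))
        rw [map_add]
        exact Commute.add_right h1 h2
      algebraMap_mem' := by
        intro r
        show Commute B (cfcHom ha (algebraMap ℝ C(spectrum ℝ P, ℝ) r))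
        rw [AlgHomClass.commutes]
        exact Algebra.commute_algebraMap_right r B }
  have hXmem : (ContinuousMap.restrict (spectrum ℝ P) (ContinuousMap.id ℝ)) ∈ 𝒜 := by
    show Commute B (cfcHom ha _)
    rw [cfcHom_id ha]
    exact h
  have hsep : 𝒜.SeparatesPoints := by
    intro x y hxy
    refine ⟨_, ⟨_, hXmem, rfl⟩, ?_⟩
    simpa [ContinuousMap.restrict] using fun hc => hxy (Subtype.ext hc)
  have htop := ContinuousMap.subalgebra_topologicalClosure_eq_top_of_separatesPoints 𝒜 hsep
  have hclosed : IsClosed (𝒜 : Set C(spectrum ℝ P, ℝ)) := by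
    have hset : (𝒜 : Set C(spectrum ℝ P, ℝ)) =
        (fun g => B * cfcHom ha g - cfcHom ha g * B) ⁻¹' {0} := by
      ext g
      simp only [SetLike.mem_coe, Set.mem_preimage, Set.mem_singleton_iff]
      show Commute B (cfcHom ha g) ↔ _
      rw [Commute, SemiconjBy]
      constructor
      · intro h'; rw [h', sub_self]
      · intro h'; exact sub_eq_zero.mp h'
    rw [hset]
    have hc := (cfcHom_isClosedEmbedding (R := ℝ) ha).continuous
    have hcont : Continuous (fun g : C(spectrum ℝ P, ℝ) =>
        B * cfcHom ha g - cfcHom ha g * B) :=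
      ((continuous_const.mul hc).sub (hc.mul continuous_const))
    exact IsClosed.preimage hcont isClosed_singleton
  have hg : g ∈ 𝒜.topologicalClosure := by rw [htop]; exact Algebra.mem_top
  have hmem : g ∈ closure (𝒜 : Set C(spectrum ℝ P, ℝ)) := hg
  rwa [hclosed.closure_eq] at hmem

/-- If `C` anticommutes with `P^δ`, `δ ≥ 0`, then the products vanish. -/
lemma aux_anticommute {P : H →L[ℂ] H} (hP : 0 ≤ P) {δ : ℝ} (hδ : 0 ≤ δ) {C : H →L[ℂ] H}
    (h : C * opPow P δ + opPow P δ * C = 0) :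
    opPow P δ * C = 0 ∧ C * opPow P δ = 0 := by
  set N := opPow P δ with hN
  have hCN : C * N = -(N * C) := eq_neg_of_add_eq_zero_left h
  have hcomm2 : Commute C (N * N) := by
    show C * (N * N) = (N * N) * C
    calc C * (N * N) = (C * N) * N := by rw [mul_assoc]
      _ = -((N * C) * N) := by rw [hCN, neg_mul]
      _ = -(N * (C * N)) := by rw [mul_assoc]
      _ = -(N * -(N * C)) := by rw [hCN]
      _ = N * (N * C) := by rw [mul_neg, neg_neg]
      _ = (N * N) * C := by rw [mul_assoc]
  have hNN : N * N = opPow P (δ + δ) := (opPow_add hP hδ hδ).symm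
  have hsqrt : cfc (fun y : ℝ => Real.sqrt y) (opPow P (δ + δ)) = N := by
    unfold opPow
    rw [← cfc_comp (fun y : ℝ => Real.sqrt y) (fun x : ℝ => x ^ (δ + δ)) P hP.isSelfAdjoint
        (Real.continuous_sqrt.continuousOn) (aux_rpow_continuous (by linarith)).continuousOn]
    exact cfc_congr fun x hx => by
      have hx0 := aux_spectrum_nonneg hP x hx
      simp only [Function.comp_apply]
      rw [Real.sqrt_eq_rpow, ← Real.rpow_mul hx0]
      congr 1
      ring
  have hcommN : Commute C N := by
    have h5 : Commute C (cfc (fun y : ℝ => Real.sqrt y) (opPow P (δ + δ))) :=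
      aux_commute_cfc (opPow_selfAdjoint P (δ + δ)) (hNN ▸ hcomm2) _
    rwa [hsqrt] at h5
  have h2 : (2 : ℂ) • (N * C) = 0 := by
    rw [two_smul]
    calc N * C + N * C = C * N + N * C := by rw [hcommN.eq]
      _ = 0 := h
  have hNC : N * C = 0 := by
    rcases smul_eq_zero.mp h2 with h' | h'
    · exact absurd h' two_ne_zero
    · exact h'
  exact ⟨hNC, by rw [hCN, hNC, neg_zero]⟩

/-- Key step: if the Heinz combination vanishes then each Aluthge-type product vanishes. -/
lemma aux_heinz_step {P W : H →L[ℂ] H} (hP : 0 ≤ P) {a b : ℝ} (ha : 0 < a) (hab : a ≤ b)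
    (h : opPow P a * W * opPow P b + opPow P b * W * opPow P a = 0) :
    opPow P a * W * opPow P b = 0 := by
  set δ : ℝ := b - a with hδdef
  have hδ : 0 ≤ δ := by simp [hδdef]; linarith
  have hb' : opPow P b = opPow P a * opPow P δ := by
    rw [← opPow_add hP ha.le hδ]; congr 1; ring
  have hb'' : opPow P b = opPow P δ * opPow P a := by
    rw [← opPow_add hP hδ ha.le]; congr 1; ring
  set C : H →L[ℂ] H := opPow P a * W * opPow P a with hC
  have hmain : C * opPow P δ + opPow P δ * C = 0 := by
    have e1 : opPow P a * W * opPow P b = C * opPow P δ := by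
      rw [hb', hC]; noncomm_ring
    have e2 : opPow P b * W * opPow P a = opPow P δ * C := by
      rw [hb'', hC]; noncomm_ring
    rw [← e1, ← e2]; exact h
  obtain ⟨h1, h2⟩ := aux_anticommute hP hδ hmain
  rw [hb', ← mul_assoc]
  exact h2

end Aux

/-- The spherical Heinz transform `T̂(t)` vanishes for some `t ∈ (0,1)` if and only if the
generalized spherical Aluthge transform `T̃(s)` vanishes for every `s ∈ (0,1]`. -/
theorem heinz_transform_eq_zero_iff_aluthge_transform_eq_zero
    {d : ℕ} (T V : Fin d → H →L[ℂ] H) (P : H →L[ℂ] H)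
    (hP : 0 ≤ P) (hP2 : P ∘L P = ∑ i, adjoint (T i) ∘L T i)
    (hT : ∀ i, T i = V i ∘L P)
    (hV : ∑ i, adjoint (V i) ∘L V i ≤ 1)
    (hV0 : ∀ i (x : H), P x = 0 → V i x = 0) :
    (∃ t ∈ Set.Ioo (0 : ℝ) 1, ∀ i,
        (1 / 2 : ℂ) • (opPow P t ∘L V i ∘L opPow P (1 - t)
          + opPow P (1 - t) ∘L V i ∘L opPow P t) = 0) ↔
      (∀ s ∈ Set.Ioc (0 : ℝ) 1, ∀ i, opPow P s ∘L V i ∘L opPow P (1 - s) = 0) := by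
  constructor
  · rintro ⟨t, ⟨ht0, ht1⟩, hth⟩ s ⟨hs0, hs1⟩ i
    -- translate the hypothesis into ring language
    have heq : opPow P t * V i * opPow P (1 - t) + opPow P (1 - t) * V i * opPow P t = 0 := by
      have h := hth i
      rw [smul_eq_zero] at h
      rcases h with h | h
      · norm_num at h
      · rw [← aux_comp_eq_mul, ← aux_comp_eq_mul]; exact h
    -- get the vanishing of the Aluthge transform at exponent t
    have hA : opPow P t * V i * opPow P (1 - t) = 0 := by
      rcases le_total t (1 - t) with hle | hle
      · exact aux_heinz_step hP ht0 hle heq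
      · have heq' : opPow P (1 - t) * V i * opPow P t + opPow P t * V i * opPow P (1 - t) = 0 := by
          rw [add_comm]; exact heq
        have := aux_heinz_step hP (by linarith : (0:ℝ) < 1 - t) hle heq'
        -- from the symmetric vanishing, recover hA using the anticommute conclusion
        calc opPow P t * V i * opPow P (1 - t)
            = -(opPow P (1 - t) * V i * opPow P t) := eq_neg_of_add_eq_zero_left heq
          _ = 0 := by rw [this, neg_zero]
    -- P (V i) P = 0
    have hPWP : ∀ y : H, P ((V i) (P y)) = 0 := by
      intro y
      have hfac : opPow P (1 - t) * opPow P t = P := by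
        rw [← opPow_add hP (by linarith) ht0.le, sub_add_cancel, opPow_one hP]
      have hzero : (P : H →L[ℂ] H) * V i * P = 0 := by
        calc (P : H →L[ℂ] H) * V i * P
            = (opPow P (1 - t) * opPow P t) * V i * (opPow P (1 - t) * opPow P t) := by
              rw [hfac]
          _ = opPow P (1 - t) * (opPow P t * V i * opPow P (1 - t)) * opPow P t := by
              noncomm_ring
          _ = 0 := by rw [hA, mul_zero, zero_mul]
      have hzero' := ContinuousLinearMap.ext_iff.mp hzero y
      simp only [ContinuousLinearMap.mul_apply, ContinuousLinearMap.zero_apply] at hzero'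
      exact hzero'
    -- P ∘ V i = 0 by density of ker P ⊔ range P
    have hPW : ∀ x : H, P ((V i) x) = 0 := by
      have hker : LinearMap.ker (P : H →ₗ[ℂ] H) ⊔ LinearMap.range (P : H →ₗ[ℂ] H) ≤ LinearMap.ker ((P ∘L V i : H →L[ℂ] H) : H →ₗ[ℂ] H) := by
        refine sup_le ?_ ?_
        · intro x hx
          have hx' : P x = 0 := hx
          have : V i x = 0 := hV0 i x hx'
          simp only [LinearMap.mem_ker, ContinuousLinearMap.coe_coe, ContinuousLinearMap.coe_comp', Function.comp_apply]
          rw [this, map_zero]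
        · rintro _ ⟨y, rfl⟩
          simp only [LinearMap.mem_ker, ContinuousLinearMap.coe_coe, ContinuousLinearMap.coe_comp', Function.comp_apply]
          exact hPWP y
      have hdense : (LinearMap.ker (P : H →ₗ[ℂ] H) ⊔ LinearMap.range (P : H →ₗ[ℂ] H) : Submodule ℂ H).topologicalClosure
          = ⊤ := by
        rw [Submodule.topologicalClosure_eq_top_iff, Submodule.eq_bot_iff]
        intro z hz
        have hPz : P z = 0 := by
          have hz1 : ∀ y : H, ⟪P y, z⟫ = 0 := fun y =>
            (Submodule.mem_orthogonal _ z).mp hz (P y)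
              (le_sup_right (α := Submodule ℂ H) ⟨y, rfl⟩)
          have hadj : adjoint P = P := hP.isSelfAdjoint.adjoint_eq
          have h2 : ⟪P z, P z⟫ = 0 := by
            calc ⟪P z, P z⟫ = ⟪(adjoint P) (P z), z⟫ := by
                  rw [ContinuousLinearMap.adjoint_inner_left]
              _ = ⟪P (P z), z⟫ := by rw [hadj]
              _ = 0 := hz1 (P z)
          exact inner_self_eq_zero.mp h2
        have hzmem : z ∈ LinearMap.ker (P : H →ₗ[ℂ] H) ⊔ LinearMap.range (P : H →ₗ[ℂ] H) :=
          le_sup_left (α := Submodule ℂ H) hPz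
        exact inner_self_eq_zero.mp ((Submodule.mem_orthogonal _ z).mp hz z hzmem)
      intro x
      have hle : (⊤ : Submodule ℂ H) ≤ LinearMap.ker ((P ∘L V i : H →L[ℂ] H) : H →ₗ[ℂ] H) := by
        rw [← hdense]
        exact Submodule.topologicalClosure_minimal _ hker (ContinuousLinearMap.isClosed_ker (P ∘L V i))
      have hxmem : x ∈ LinearMap.ker ((P ∘L V i : H →L[ℂ] H) : H →ₗ[ℂ] H) := hle Submodule.mem_top
      simpa using hxmem
    -- conclude
    ext x
    simp only [ContinuousLinearMap.coe_comp', Function.comp_apply,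
      ContinuousLinearMap.zero_apply]
    exact opPow_apply_eq_zero hP hs0 (hPW (opPow P (1 - s) x))
  · intro h
    refine ⟨1 / 2, ⟨by norm_num, by norm_num⟩, fun i => ?_⟩
    have e : (1 : ℝ) - 1 / 2 = 1 / 2 := by norm_num
    have h1 := h (1 / 2) ⟨by norm_num, by norm_num⟩ i
    rw [e] at h1
    rw [e, h1]
    simp
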